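/- For the rank-6 simple fusion ring with formal codegrees (65+17√13)/2, 9 (multiplicity 4), (65-17√13)/2: the ratio ((65+17√13)/2)/9 = (65+17√13)/18 is not an algebraic integer, hence this fusion ring admits no complex categorification by the Drinfeld center criterion. -/

import Mathlib

open Polynomial

/-- For the rank-6 simple fusion ring with formal codegrees (65+17√13)/2,
9 (multiplicity 4), (65-17√13)/2, the ratio ((65+17√13)/2)/9 = (65+17√13)/18
is not an algebraic integer; hence by the Drinfeld center criterion this fusion
ring admits no complex categorification. -/
theorem rank6_simple_fails_drinfeld :
    ((65 + 17 * Real.sqrt 13) / 2) / 9 = (65 + 17 * Real.sqrt 13) / 18 ∧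
    ¬ IsIntegral ℤ ((65 + 17 * Real.sqrt 13) / 18) := by
  refine ⟨by ring, ?_⟩
  intro hx
  set x : ℝ := (65 + 17 * Real.sqrt 13) / 18 with hxdef
  -- irrationality of x
  have hs13 : Irrational (Real.sqrt 13) := by
    have h : (Nat.Prime 13) := by norm_num
    simpa using h.irrational_sqrt
  have hxirr : Irrational x := by
    have h1 : Irrational ((17 : ℕ) * Real.sqrt 13) := hs13.natCast_mul (by norm_num)
    have h2 : Irrational (((65 : ℕ) : ℝ) + (17 : ℕ) * Real.sqrt 13) := h1.natCast_add 65
    have h3 := h2.div_natCast (m := 18) (by norm_num)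
    simpa [hxdef] using h3
  -- the quadratic polynomial annihilating x
  set p : ℚ[X] := C 1 * X ^ 2 + C (-(65/9)) * X + C (13/9) with hpdef
  have hpmonic : p.Monic := by
    have : p.leadingCoeff = 1 := by
      rw [hpdef, Polynomial.leadingCoeff, Polynomial.natDegree_quadratic (by norm_num)]
      simp
    exact this
  have hpdeg : p.natDegree = 2 := Polynomial.natDegree_quadratic (by norm_num)
  have h13 : Real.sqrt 13 * Real.sqrt 13 = 13 := Real.mul_self_sqrt (by norm_num)
  have hroot : x ^ 2 - (65/9 : ℝ) * x + 13/9 = 0 := by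
    have h13' : Real.sqrt 13 ^ 2 = 13 := Real.sq_sqrt (by norm_num)
    rw [hxdef]; ring_nf; linear_combination (289/324 : ℝ) * h13'
  have hp0 : Polynomial.aeval x p = 0 := by
    rw [hpdef]
    simp only [map_add, map_mul, Polynomial.aeval_C, Polynomial.aeval_X, map_pow]
    push_cast
    norm_num
    linarith [hroot]
  have hQint : IsIntegral ℚ x := ⟨p, hpmonic, hp0⟩
  set q : ℚ[X] := minpoly ℚ x with hqdef
  have hqmonic : q.Monic := minpoly.monic hQint
  have hdvd : q ∣ p := minpoly.dvd ℚ x hp0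
  have hqle : q.natDegree ≤ 2 := hpdeg ▸ Polynomial.natDegree_le_of_dvd hdvd hpmonic.ne_zero
  have hqpos : 0 < q.natDegree := minpoly.natDegree_pos hQint
  have hqne1 : q.natDegree ≠ 1 := by
    intro h1
    have heq : q = X + C (q.coeff 0) := hqmonic.eq_X_add_C h1
    have haev : Polynomial.aeval x q = 0 := minpoly.aeval ℚ x
    rw [heq] at haev
    simp only [map_add, Polynomial.aeval_X, Polynomial.aeval_C] at haev
    rw [eq_ratCast (algebraMap ℚ ℝ) (q.coeff 0)] at haev
    exact hxirr ⟨-(q.coeff 0), by push_cast; linarith⟩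
  have hqdeg : q.natDegree = 2 := by omega
  have hqp : q = p := by
    refine Polynomial.eq_of_monic_of_associated hqmonic hpmonic ?_
    exact Polynomial.associated_of_dvd_of_natDegree_le hdvd hpmonic.ne_zero
      (by rw [hpdeg, hqdeg])
  -- coefficient 0 of minpoly ℚ x is 13/9
  have hc0 : q.coeff 0 = 13/9 := by rw [hqp, hpdef]; simp
  -- but minpoly ℚ x has integer coefficients since x is integral over ℤ
  have hmap : minpoly ℚ x = (minpoly ℤ x).map (algebraMap ℤ ℚ) :=
    minpoly.isIntegrallyClosed_eq_field_fractions' ℚ hx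
  have : (((minpoly ℤ x).coeff 0 : ℤ) : ℚ) = 13/9 := by
    rw [← hc0, hqdef, hmap, Polynomial.coeff_map]; rfl
  have h9 : ((9 * (minpoly ℤ x).coeff 0 : ℤ) : ℚ) = 13 := by push_cast; linarith [this]
  have h9' : (9 : ℤ) * (minpoly ℤ x).coeff 0 = 13 := by exact_mod_cast h9
  omega
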